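/- Let p be a prime, A an integral domain of characteristic p, and a ∈ A. Let B := A[X]/(X^p − X − a). If u ∈ A is such that the image of u in B is a p-th power of an element of B, then u is already a p-th power in A. -/

import Mathlib

open Polynomial

/-- If `u ∈ A` becomes a `p`-th power in the Artin–Schreier extension
`B = A[X]/(X^p − X − a)` of an integral domain `A` of characteristic `p`,
then `u` is already a `p`-th power in `A`. -/
theorem pth_power_in_artin_schreier_extension
    (p : ℕ) (hp : p.Prime) (A : Type*) [CommRing A] [IsDomain A] [CharP A p]
    (a u : A)
    (h : ∃ b : AdjoinRoot (X ^ p - X - C a),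
      b ^ p = AdjoinRoot.of (X ^ p - X - C a) u) :
    ∃ c : A, c ^ p = u := by
  haveI := Fact.mk hp
  haveI : ExpChar A p := ExpChar.prime hp
  obtain ⟨b, hb⟩ := h
  obtain ⟨f, hf⟩ := AdjoinRoot.mk_surjective b
  rw [← hf] at hb
  set q : A[X] := X ^ p - X - C a with hqdef
  have hp1 : 1 < p := hp.one_lt
  have hq' : q = X ^ p - (X + C a) := by ring
  have hdlt : (X + C a : A[X]).degree < (p : ℕ) := by
    rw [degree_X_add_C]
    exact_mod_cast hp1
  have hqm : q.Monic := by rw [hq']; exact monic_X_pow_sub hdlt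
  have hdegq : q.degree = p := by
    rw [hq', degree_sub_eq_left_of_degree_lt (by rwa [degree_X_pow]), degree_X_pow]
  have hndegq : q.natDegree = p := natDegree_eq_of_degree_eq_some hdegq
  set f' : A[X] := f %ₘ q with hf'def
  have hmk : AdjoinRoot.mk q f' = AdjoinRoot.mk q f := by
    conv_rhs => rw [← modByMonic_add_div f q]
    rw [map_add, map_mul, AdjoinRoot.mk_self, zero_mul, add_zero]
  set g : A[X] := f'.map (frobenius A p) with hgdef
  -- f'^p = expand p g
  have hfp : f' ^ p = expand A p g := by
    rw [hgdef, ← map_expand, map_frobenius_expand]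
  -- root q satisfies root^p = root + of q a
  have hroot : (AdjoinRoot.root q) ^ p = AdjoinRoot.root q + AdjoinRoot.of q a := by
    have h0 : aeval (AdjoinRoot.root q) q = 0 := by
      rw [AdjoinRoot.aeval_eq, AdjoinRoot.mk_self]
    rw [hqdef] at h0
    simp only [map_sub, map_pow, aeval_X, aeval_C] at h0
    rw [← AdjoinRoot.algebraMap_eq]
    linear_combination h0
  have key : AdjoinRoot.mk q (g.comp (X + C a)) = AdjoinRoot.mk q (C u) := by
    have : AdjoinRoot.mk q (g.comp (X + C a)) = aeval (AdjoinRoot.root q) (g.comp (X + C a)) :=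
      (AdjoinRoot.aeval_eq _).symm
    rw [this, aeval_comp]
    simp only [map_add, aeval_X, aeval_C, AdjoinRoot.algebraMap_eq]
    rw [← hroot, ← expand_aeval, ← hfp, AdjoinRoot.aeval_eq, map_pow, hmk, hb]
    rw [← AdjoinRoot.algebraMap_eq, AdjoinRoot.mk_C, AdjoinRoot.algebraMap_eq]
  -- degree bound on g.comp (X + C a)
  have hdg : (g.comp (X + C a)).natDegree < p := by
    have h1 : (g.comp (X + C a)).natDegree ≤ g.natDegree * (X + C a).natDegree :=
      natDegree_comp_le
    have h2 : (X + C a : A[X]).natDegree = 1 := natDegree_X_add_C a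
    have h3 : g.natDegree ≤ f'.natDegree := natDegree_map_le
    have h4 : f'.natDegree < p := by
      have h5 := natDegree_modByMonic_lt f hqm (fun h1 => by
        rw [h1, natDegree_one] at hndegq; omega)
      rw [← hf'def] at h5
      omega
    calc (g.comp (X + C a)).natDegree ≤ g.natDegree * 1 := by rw [← h2]; exact h1
      _ = g.natDegree := mul_one _
      _ ≤ f'.natDegree := h3
      _ < p := h4
  have heq : g.comp (X + C a) = C u := by
    have hdvd : q ∣ g.comp (X + C a) - C u := by
      rw [← AdjoinRoot.mk_eq_zero, map_sub, key, sub_self]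
    have hlt : (g.comp (X + C a) - C u).degree < q.degree := by
      rw [hdegq]
      refine lt_of_le_of_lt (degree_sub_le _ _) (max_lt ?_ ?_)
      · exact lt_of_le_of_lt degree_le_natDegree (by exact_mod_cast hdg)
      · exact lt_of_le_of_lt (degree_C_le) (by exact_mod_cast hp.pos)
    have := eq_zero_of_dvd_of_degree_lt hdvd hlt
    linear_combination this
  have hg : g = C u := by
    have h1 : g = (g.comp (X + C a)).comp (X - C a) := by
      rw [comp_assoc]
      simp [add_comp, X_comp, C_comp, sub_add_cancel]
    rw [h1, heq, C_comp]
  refine ⟨f'.coeff 0, ?_⟩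
  have := congrArg (fun r : A[X] => r.coeff 0) hg
  simpa [hgdef, coeff_map, frobenius_def] using this
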